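/- Suppose there exist constants C > 0 and R ≥ 1 such that for every x' ∈ ℝ² and every pair (y, B) with y ∈ ℝ² and B a 2×2 real matrix with Tr(B) = 0: √(|y|² + |B|²) ≤ C · max_{k ∈ ℤ²∖{(0,0)}, |k| ≤ R} | u_k(x')·y + ⟨∇u_k(x'), B⟩ |. Then for every x' ∈ ℝ², every A' ∈ SL(2,ℝ), and every pair (y, B) with y ∈ ℝ² and B a 2×2 real matrix with Tr(A'^{−1}B) = 0: √(|y|² + |B|²) ≤ C · |A'| · max_{k ∈ ℤ²∖{(0,0)}, |k| ≤ R} | u_k(x')·y + ⟨A'·∇u_k(x'), B⟩ |. -/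

import Mathlib

open Real

/-- The real Fourier basis function `e_k` on `ℝ²`. -/
noncomputable def eFun (k : ℤ × ℤ) (x : ℝ × ℝ) : ℝ :=
  if 0 < k.1 ∨ (k.1 = 0 ∧ 0 < k.2) then
    Real.sin ((k.1 : ℝ) * x.1 + (k.2 : ℝ) * x.2)
  else
    Real.cos ((k.1 : ℝ) * x.1 + (k.2 : ℝ) * x.2)

noncomputable def lmap (k : ℤ × ℤ) : (ℝ × ℝ) →L[ℝ] ℝ :=
  (k.1 : ℝ) • (ContinuousLinearMap.fst ℝ ℝ ℝ) + (k.2 : ℝ) • (ContinuousLinearMap.snd ℝ ℝ ℝ)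

lemma lmap_apply (k : ℤ × ℤ) (v : ℝ × ℝ) : lmap k v = (k.1:ℝ) * v.1 + (k.2:ℝ) * v.2 := by
  simp [lmap, smul_eq_mul]

noncomputable def cK (k : ℤ × ℤ) (x : ℝ × ℝ) : ℝ :=
  if 0 < k.1 ∨ (k.1 = 0 ∧ 0 < k.2) then Real.cos ((k.1:ℝ)*x.1 + (k.2:ℝ)*x.2)
  else -Real.sin ((k.1:ℝ)*x.1 + (k.2:ℝ)*x.2)

noncomputable def dK (k : ℤ × ℤ) (x : ℝ × ℝ) : ℝ :=
  if 0 < k.1 ∨ (k.1 = 0 ∧ 0 < k.2) then -Real.sin ((k.1:ℝ)*x.1 + (k.2:ℝ)*x.2)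
  else -Real.cos ((k.1:ℝ)*x.1 + (k.2:ℝ)*x.2)

lemma hasFDerivAt_theta (k : ℤ × ℤ) (x : ℝ × ℝ) :
    HasFDerivAt (fun x : ℝ × ℝ => (k.1:ℝ)*x.1 + (k.2:ℝ)*x.2) (lmap k) x := by
  have h : (fun x : ℝ × ℝ => (k.1:ℝ)*x.1 + (k.2:ℝ)*x.2) = ⇑(lmap k) := by
    funext v; rw [lmap_apply]
  rw [h]
  exact (lmap k).hasFDerivAt

lemma hasFDerivAt_eFun (k : ℤ × ℤ) (x : ℝ × ℝ) :
    HasFDerivAt (eFun k) (cK k x • lmap k) x := by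
  unfold eFun cK
  by_cases h : 0 < k.1 ∨ (k.1 = 0 ∧ 0 < k.2)
  · simp only [if_pos h]
    exact (Real.hasDerivAt_sin _).comp_hasFDerivAt x (hasFDerivAt_theta k x)
  · simp only [if_neg h, neg_smul]
    exact (Real.hasDerivAt_cos _).comp_hasFDerivAt x (hasFDerivAt_theta k x)

lemma hasFDerivAt_cK (k : ℤ × ℤ) (x : ℝ × ℝ) :
    HasFDerivAt (cK k) (dK k x • lmap k) x := by
  unfold cK dK
  by_cases h : 0 < k.1 ∨ (k.1 = 0 ∧ 0 < k.2)
  · simp only [if_pos h, neg_smul]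
    exact (Real.hasDerivAt_cos _).comp_hasFDerivAt x (hasFDerivAt_theta k x)
  · simp only [if_neg h, neg_smul]
    have h2 := ((Real.hasDerivAt_sin ((k.1:ℝ)*x.1 + (k.2:ℝ)*x.2)).comp_hasFDerivAt x
      (hasFDerivAt_theta k x)).fun_neg
    have heq : (-(Real.cos ((k.1:ℝ)*x.1 + (k.2:ℝ)*x.2) • lmap k)) =
        (-Real.cos ((k.1:ℝ)*x.1 + (k.2:ℝ)*x.2)) • lmap k := by
      refine ContinuousLinearMap.ext fun v => ?_
      simp
    rw [heq] at h2
    simpa [Function.comp] using h2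

/-- The divergence-free velocity field `u_k := ∇^⊥ Δ^{-1} e_k = -|k|^{-2} ∇^⊥ e_k`,
where `∇^⊥ f = (-∂₂ f, ∂₁ f)`. -/
noncomputable def uFun (k : ℤ × ℤ) (x : ℝ × ℝ) : ℝ × ℝ :=
  (-(((k.1 : ℝ) ^ 2 + (k.2 : ℝ) ^ 2)⁻¹)) •
    (-(fderiv ℝ (eFun k) x (0, 1)), fderiv ℝ (eFun k) x (1, 0))


lemma fderiv_eFun (k : ℤ × ℤ) (x : ℝ × ℝ) :
    fderiv ℝ (eFun k) x = cK k x • lmap k := (hasFDerivAt_eFun k x).fderiv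

lemma uFun_eq (k : ℤ × ℤ) : uFun k = fun x =>
    (((((k.1:ℝ)^2+(k.2:ℝ)^2)⁻¹ * (k.2:ℝ)) * cK k x),
     -((((k.1:ℝ)^2+(k.2:ℝ)^2)⁻¹ * (k.1:ℝ)) * cK k x)) := by
  funext x
  rw [uFun, fderiv_eFun]
  simp only [ContinuousLinearMap.smul_apply, lmap_apply, Prod.smul_mk, smul_eq_mul]
  refine Prod.ext ?_ ?_ <;> simp <;> ring

lemma hasFDerivAt_uFun (k : ℤ × ℤ) (x : ℝ × ℝ) :
    HasFDerivAt (uFun k)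
      ((((((k.1:ℝ)^2+(k.2:ℝ)^2)⁻¹ * (k.2:ℝ)) * dK k x) • lmap k).prod
       (((-((((k.1:ℝ)^2+(k.2:ℝ)^2)⁻¹ * (k.1:ℝ))) * dK k x) • lmap k))) x := by
  rw [uFun_eq]
  have h1 := (hasFDerivAt_cK k x).const_mul ((((k.1:ℝ)^2+(k.2:ℝ)^2)⁻¹ * (k.2:ℝ)))
  have h2 := (hasFDerivAt_cK k x).const_mul (-((((k.1:ℝ)^2+(k.2:ℝ)^2)⁻¹ * (k.1:ℝ))))
  rw [smul_smul] at h1 h2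
  have := HasFDerivAt.prodMk h1 h2
  convert this using 2
  all_goals first | rfl | ring

/-- The Euclidean dot product on `ℝ²`. -/
def dotR (a b : ℝ × ℝ) : ℝ := a.1 * b.1 + a.2 * b.2

/-- The gradient matrix `∇u_k(x)` with entries `(∇u_k(x))_{ij} = ∂_i (u_k)_j (x)`. -/
noncomputable def gradU (k : ℤ × ℤ) (x : ℝ × ℝ) : Matrix (Fin 2) (Fin 2) ℝ :=
  Matrix.of fun i j =>
    if j = 0 then (fderiv ℝ (uFun k) x (if i = 0 then ((1 : ℝ), (0 : ℝ)) else (0, 1))).1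
    else (fderiv ℝ (uFun k) x (if i = 0 then ((1 : ℝ), (0 : ℝ)) else (0, 1))).2


lemma trace_gradU (k : ℤ × ℤ) (x : ℝ × ℝ) : Matrix.trace (gradU k x) = 0 := by
  rw [Matrix.trace_fin_two]
  have hf := (hasFDerivAt_uFun k x).fderiv
  simp only [gradU, Matrix.of_apply, if_pos rfl, one_ne_zero, if_neg]
  rw [hf]
  simp only [ContinuousLinearMap.prod_apply, ContinuousLinearMap.smul_apply, lmap_apply,
    smul_eq_mul, if_true, if_false]
  ring

/-- The Frobenius inner product `⟨M, N⟩ = Tr(MᵀN)` on `2 × 2` real matrices. -/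
def frob (M N : Matrix (Fin 2) (Fin 2) ℝ) : ℝ := ∑ i, ∑ j, M i j * N i j

/-- The Frobenius norm of a `2 × 2` real matrix. -/
noncomputable def frobNorm (M : Matrix (Fin 2) (Fin 2) ℝ) : ℝ := Real.sqrt (frob M M)


lemma frob_mul_left (A G B : Matrix (Fin 2) (Fin 2) ℝ) (hG : Matrix.trace G = 0) (c : ℝ) :
    frob (A * G) B = frob G (A.transpose * B - c • (1 : Matrix (Fin 2) (Fin 2) ℝ)) := by
  rw [Matrix.trace_fin_two] at hG
  simp only [frob, Fin.sum_univ_two, Matrix.mul_apply, Matrix.sub_apply, Matrix.smul_apply,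
    Matrix.one_apply, Matrix.transpose_apply, smul_eq_mul]
  norm_num
  linear_combination c * hG


set_option maxHeartbeats 1000000 in
lemma key_ineq (a b c2 d p q r s y1 y2 : ℝ) (hdet2 : a * d - b * c2 = 1)
    (htr2 : d * p - b * r - c2 * q + a * s = 0) :
    y1 ^ 2 + y2 ^ 2 + (p^2+q^2+r^2+s^2) ≤ (a^2+b^2+c2^2+d^2) * (y1 ^ 2 + y2 ^ 2 + ((a*p+c2*r - ((a*p+c2*r+b*q+d*s)/2))^2 + (a*q+c2*s)^2 + (b*p+d*r)^2 + (b*q+d*s - ((a*p+c2*r+b*q+d*s)/2))^2)) := by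
  have hK2 : (2:ℝ) ≤ (a^2+b^2+c2^2+d^2) := by nlinarith [sq_nonneg (a - d), sq_nonneg (b + c2)]
  have hy : y1^2 + y2^2 ≤ (a^2+b^2+c2^2+d^2) * (y1^2 + y2^2) := by
    nlinarith [sq_nonneg y1, sq_nonneg y2]
  have hE : (a^2+b^2+c2^2+d^2) * ((a*p+c2*r - ((a*p+c2*r+b*q+d*s)/2))^2 + (a*q+c2*s)^2 + (b*p+d*r)^2 + (b*q+d*s - ((a*p+c2*r+b*q+d*s)/2))^2) = (p^2+q^2+r^2+s^2) + ((a*(a*p+c2*r - ((a*p+c2*r+b*q+d*s)/2))+b*(b*p+d*r))^2 + (a*(a*q+c2*s)+b*(b*q+d*s - ((a*p+c2*r+b*q+d*s)/2)))^2 + (c2*(a*p+c2*r - ((a*p+c2*r+b*q+d*s)/2))+d*(b*p+d*r))^2 + (c2*(a*q+c2*s)+d*(b*q+d*s - ((a*p+c2*r+b*q+d*s)/2)))^2) + ((a*p+c2*r+b*q+d*s)/2)^2 * (a^2+b^2+c2^2+d^2) := by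
    linear_combination ((a*d-b*c2+1)*(p^2+q^2+r^2+s^2)) * hdet2 - ((a*p+c2*r+b*q+d*s)*(a*d-b*c2)) * htr2
  have h1 : p^2+q^2+r^2+s^2 ≤ (a^2+b^2+c2^2+d^2) * ((a*p+c2*r - ((a*p+c2*r+b*q+d*s)/2))^2 + (a*q+c2*s)^2 + (b*p+d*r)^2 + (b*q+d*s - ((a*p+c2*r+b*q+d*s)/2))^2) := by
    linarith [hE, sq_nonneg (a*(a*p+c2*r - ((a*p+c2*r+b*q+d*s)/2))+b*(b*p+d*r)), sq_nonneg (a*(a*q+c2*s)+b*(b*q+d*s - ((a*p+c2*r+b*q+d*s)/2))), sq_nonneg (c2*(a*p+c2*r - ((a*p+c2*r+b*q+d*s)/2))+d*(b*p+d*r)), sq_nonneg (c2*(a*q+c2*s)+d*(b*q+d*s - ((a*p+c2*r+b*q+d*s)/2))),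
      mul_nonneg (sq_nonneg ((a*p+c2*r+b*q+d*s)/2)) (by positivity : (0:ℝ) ≤ (a^2+b^2+c2^2+d^2))]
  linarith [h1, hy]

set_option maxHeartbeats 1000000 in
/-- **Nondegeneracy for the Jacobian process at a general base point from nondegeneracy at
the identity.** If `√(|y|² + |B|²) ≤ C max_{0<|k|≤R} |u_k(x')·y + ⟨∇u_k(x'), B⟩|` for all
traceless `B`, then for every `A' ∈ SL(2,ℝ)` and every `B` with `Tr(A'⁻¹ B) = 0`,
`√(|y|² + |B|²) ≤ C |A'| max_{0<|k|≤R} |u_k(x')·y + ⟨A' ∇u_k(x'), B⟩|`. -/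
theorem jacobian_nondegeneracy_of_nondegeneracy_at_identity
    (C R : ℝ) (hC : 0 < C) (hR : 1 ≤ R)
    (hyp : ∀ x' : ℝ × ℝ, ∀ y : ℝ × ℝ, ∀ B : Matrix (Fin 2) (Fin 2) ℝ,
      Matrix.trace B = 0 →
      Real.sqrt (y.1 ^ 2 + y.2 ^ 2 + frob B B) ≤ C *
        sSup {t | ∃ k : ℤ × ℤ, k ≠ 0 ∧ (k.1 : ℝ) ^ 2 + (k.2 : ℝ) ^ 2 ≤ R ^ 2 ∧
          t = |dotR (uFun k x') y + frob (gradU k x') B|}) :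
    ∀ x' : ℝ × ℝ, ∀ A' : Matrix (Fin 2) (Fin 2) ℝ, A'.det = 1 →
      ∀ y : ℝ × ℝ, ∀ B : Matrix (Fin 2) (Fin 2) ℝ, Matrix.trace (A'⁻¹ * B) = 0 →
      Real.sqrt (y.1 ^ 2 + y.2 ^ 2 + frob B B) ≤ C * frobNorm A' *
        sSup {t | ∃ k : ℤ × ℤ, k ≠ 0 ∧ (k.1 : ℝ) ^ 2 + (k.2 : ℝ) ^ 2 ≤ R ^ 2 ∧
          t = |dotR (uFun k x') y + frob (A' * gradU k x') B|} := by
  intro x' A' hdet y B htr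
  set μ : ℝ := Matrix.trace (A'.transpose * B) / 2 with hμ
  set B' : Matrix (Fin 2) (Fin 2) ℝ := A'.transpose * B - μ • 1 with hB'
  have hB'tr : Matrix.trace B' = 0 := by
    rw [hB', Matrix.trace_sub, Matrix.trace_smul, Matrix.trace_one]
    simp only [hμ, Fintype.card_fin, smul_eq_mul]
    push_cast
    ring
  have hsets : {t | ∃ k : ℤ × ℤ, k ≠ 0 ∧ (k.1 : ℝ) ^ 2 + (k.2 : ℝ) ^ 2 ≤ R ^ 2 ∧
      t = |dotR (uFun k x') y + frob (gradU k x') B'|}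
      = {t | ∃ k : ℤ × ℤ, k ≠ 0 ∧ (k.1 : ℝ) ^ 2 + (k.2 : ℝ) ^ 2 ≤ R ^ 2 ∧
      t = |dotR (uFun k x') y + frob (A' * gradU k x') B|} := by
    ext t
    simp only [Set.mem_setOf_eq]
    refine exists_congr fun k => and_congr_right fun _ => and_congr_right fun _ => ?_
    rw [frob_mul_left A' (gradU k x') B (trace_gradU k x') μ, ← hB']
  have hmain := hyp x' y B' hB'tr
  rw [hsets] at hmain
  have hdet2 : A' 0 0 * A' 1 1 - A' 0 1 * A' 1 0 = 1 := by
    rw [← Matrix.det_fin_two]; exact hdet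
  have hinv : A'⁻¹ = A'.adjugate := by
    rw [Matrix.inv_def, hdet, Ring.inverse_one, one_smul]
  rw [hinv, Matrix.adjugate_fin_two] at htr
  have htr2 : A' 1 1 * B 0 0 - A' 0 1 * B 1 0 - A' 1 0 * B 0 1 + A' 0 0 * B 1 1 = 0 := by
    rw [Matrix.trace_fin_two] at htr
    simp only [Matrix.mul_apply, Fin.sum_univ_two, Matrix.cons_val', Matrix.cons_val_zero,
      Matrix.cons_val_one, Matrix.head_cons, Matrix.empty_val', Matrix.cons_val_fin_one,
      Matrix.head_fin_const, Matrix.of_apply] at htr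
    linear_combination htr
  have hK0 : 0 ≤ frob A' A' := by
    simp only [frob, Fin.sum_univ_two]
    nlinarith [sq_nonneg (A' 0 0), sq_nonneg (A' 0 1), sq_nonneg (A' 1 0), sq_nonneg (A' 1 1)]
  have hkey : y.1 ^ 2 + y.2 ^ 2 + frob B B ≤ frob A' A' * (y.1 ^ 2 + y.2 ^ 2 + frob B' B') := by
    have hfBB : frob B B = B 0 0 ^ 2 + B 0 1 ^ 2 + B 1 0 ^ 2 + B 1 1 ^ 2 := by
      simp only [frob, Fin.sum_univ_two]; ring
    have hfAA : frob A' A' = A' 0 0 ^ 2 + A' 0 1 ^ 2 + A' 1 0 ^ 2 + A' 1 1 ^ 2 := by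
      simp only [frob, Fin.sum_univ_two]; ring
    have hfB : frob B' B' = B' 0 0 ^ 2 + B' 0 1 ^ 2 + B' 1 0 ^ 2 + B' 1 1 ^ 2 := by
      simp only [frob, Fin.sum_univ_two]; ring
    have hB'00 : B' 0 0 = (A' 0 0*B 0 0+A' 1 0*B 1 0 - ((A' 0 0*B 0 0+A' 1 0*B 1 0+A' 0 1*B 0 1+A' 1 1*B 1 1)/2)) := by
      simp only [hB', hμ, Matrix.sub_apply, Matrix.smul_apply, Matrix.one_apply,
        Matrix.mul_apply, Matrix.transpose_apply, Matrix.trace_fin_two, Fin.sum_univ_two,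
        smul_eq_mul]
      norm_num
      try ring
    have hB'01 : B' 0 1 = (A' 0 0*B 0 1+A' 1 0*B 1 1) := by
      simp only [hB', hμ, Matrix.sub_apply, Matrix.smul_apply, Matrix.one_apply,
        Matrix.mul_apply, Matrix.transpose_apply, Matrix.trace_fin_two, Fin.sum_univ_two,
        smul_eq_mul]
      norm_num
      try ring
    have hB'10 : B' 1 0 = (A' 0 1*B 0 0+A' 1 1*B 1 0) := by
      simp only [hB', hμ, Matrix.sub_apply, Matrix.smul_apply, Matrix.one_apply,
        Matrix.mul_apply, Matrix.transpose_apply, Matrix.trace_fin_two, Fin.sum_univ_two,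
        smul_eq_mul]
      norm_num
      try ring
    have hB'11 : B' 1 1 = (A' 0 1*B 0 1+A' 1 1*B 1 1 - ((A' 0 0*B 0 0+A' 1 0*B 1 0+A' 0 1*B 0 1+A' 1 1*B 1 1)/2)) := by
      simp only [hB', hμ, Matrix.sub_apply, Matrix.smul_apply, Matrix.one_apply,
        Matrix.mul_apply, Matrix.transpose_apply, Matrix.trace_fin_two, Fin.sum_univ_two,
        smul_eq_mul]
      norm_num
      try ring
    rw [hfBB, hfAA, hfB, hB'00, hB'01, hB'10, hB'11]
    have := key_ineq (A' 0 0) (A' 0 1) (A' 1 0) (A' 1 1) (B 0 0) (B 0 1) (B 1 0) (B 1 1)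
      y.1 y.2 hdet2 htr2
    linarith [this]
  calc Real.sqrt (y.1 ^ 2 + y.2 ^ 2 + frob B B)
      ≤ Real.sqrt (frob A' A' * (y.1 ^ 2 + y.2 ^ 2 + frob B' B')) := Real.sqrt_le_sqrt hkey
    _ = frobNorm A' * Real.sqrt (y.1 ^ 2 + y.2 ^ 2 + frob B' B') := by
        rw [Real.sqrt_mul hK0, frobNorm]
    _ ≤ frobNorm A' * (C * sSup {t | ∃ k : ℤ × ℤ, k ≠ 0 ∧ (k.1 : ℝ) ^ 2 + (k.2 : ℝ) ^ 2 ≤ R ^ 2 ∧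
          t = |dotR (uFun k x') y + frob (A' * gradU k x') B|}) :=
        mul_le_mul_of_nonneg_left hmain (Real.sqrt_nonneg _)
    _ = C * frobNorm A' * sSup {t | ∃ k : ℤ × ℤ, k ≠ 0 ∧ (k.1 : ℝ) ^ 2 + (k.2 : ℝ) ^ 2 ≤ R ^ 2 ∧
          t = |dotR (uFun k x') y + frob (A' * gradU k x') B|} := by ring
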